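/- For any positive integer m, the number of conjugacy classes of the wreath product ℤ/(n+1) ≀ S_m = (ℤ/(n+1))^m ⋊ S_m equals the number of (n+1)-tuples of partitions (λ^0, …, λ^n) with ∑_{j} |λ^j| = m, i.e., the number of ℤ/(n+1)-weighted partitions of m. -/

import Mathlib

/-- The permutation action of `S_m` on `(ℤ/(n+1))^m`, as a homomorphism into the
automorphism group, used to form the wreath product `ℤ/(n+1) ≀ S_m`. -/
def wreathPermHom (n m : ℕ) :
    Equiv.Perm (Fin m) →* MulAut (Fin m → Multiplicative (ZMod (n + 1))) where
  toFun σ :=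
    { toFun := fun f => f ∘ σ.symm
      invFun := fun f => f ∘ σ
      left_inv := fun f => by ext i; simp
      right_inv := fun f => by ext i; simp
      map_mul' := fun f g => rfl }
  map_one' := by ext f i; rfl
  map_mul' := fun σ τ => by ext f i; rfl

set_option linter.unusedSectionVars false
set_option maxHeartbeats 1000000

open Equiv Equiv.Perm Finset

namespace WreathAux

section General
variable {α β : Type*} [Fintype α] [DecidableEq α] [Fintype β] [DecidableEq β]
  {A : Type*} [CommGroup A]

def orbOf (σ : Perm α) (x : α) : Finset α := univ.filter (σ.SameCycle x)

def orbs (σ : Perm α) : Finset (Finset α) := univ.image (orbOf σ)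

def wdata (f : α → A) (O : Finset α) : ℕ × A := (O.card, ∏ j ∈ O, f j)

def wM (f : α → A) (σ : Perm α) : Multiset (ℕ × A) := (orbs σ).val.map (wdata f)

lemma mem_orbOf {σ : Perm α} {x y : α} : y ∈ orbOf σ x ↔ σ.SameCycle x y := by
  simp [orbOf]

lemma mem_orbOf_self (σ : Perm α) (x : α) : x ∈ orbOf σ x := mem_orbOf.2 (SameCycle.refl _ _)

lemma orbOf_eq_of_mem {σ : Perm α} {x y : α} (h : y ∈ orbOf σ x) : orbOf σ y = orbOf σ x := by
  rw [mem_orbOf] at h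
  ext z
  simp only [mem_orbOf]
  exact ⟨fun hz => h.trans hz, fun hz => h.symm.trans hz⟩

lemma orbOf_mem_orbs (σ : Perm α) (x : α) : orbOf σ x ∈ orbs σ := mem_image_of_mem _ (mem_univ x)

lemma orbs_nonempty {σ : Perm α} {O : Finset α} (h : O ∈ orbs σ) : O.Nonempty := by
  obtain ⟨x, -, rfl⟩ := mem_image.1 h
  exact ⟨x, mem_orbOf_self σ x⟩

lemma orbs_eq_orbOf {σ : Perm α} {O : Finset α} (h : O ∈ orbs σ) {x : α} (hx : x ∈ O) :
    orbOf σ x = O := by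
  obtain ⟨y, -, rfl⟩ := mem_image.1 h
  exact orbOf_eq_of_mem hx

lemma orbs_disjoint {σ : Perm α} {O₁ O₂ : Finset α} (h₁ : O₁ ∈ orbs σ) (h₂ : O₂ ∈ orbs σ)
    (hne : O₁ ≠ O₂) : Disjoint O₁ O₂ := by
  rw [Finset.disjoint_left]
  intro x hx₁ hx₂
  exact hne ((orbs_eq_orbOf h₁ hx₁).symm.trans (orbs_eq_orbOf h₂ hx₂))

lemma sum_orbs_card (σ : Perm α) : ∑ O ∈ orbs σ, O.card = Fintype.card α := by
  have hu : (orbs σ).biUnion id = univ := by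
    ext x
    simp only [mem_biUnion, mem_univ, iff_true, id]
    exact ⟨_, orbOf_mem_orbs σ x, mem_orbOf_self σ x⟩
  calc ∑ O ∈ orbs σ, O.card
      = ((orbs σ).biUnion id).card :=
        (Finset.card_biUnion (fun O h1 P h2 hne => orbs_disjoint h1 h2 hne)).symm
    _ = Fintype.card α := by rw [hu, Finset.card_univ]

lemma sameCycle_exists_pow {σ : Perm α} {x y : α} (h : σ.SameCycle x y) :
    ∃ t : ℕ, (σ ^ t) x = y := by
  obtain ⟨i, -, hi⟩ := h.exists_pow_eq'
  exact ⟨i, hi⟩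

lemma pow_mul_self_apply {σ : Perm α} {x : α} {k : ℕ} (hk : (σ ^ k) x = x) (q : ℕ) :
    (σ ^ (k * q)) x = x := by
  induction q with
  | zero => simp
  | succ q ih => rw [Nat.mul_succ, pow_add, Equiv.Perm.mul_apply, hk, ih]

lemma pow_mod_apply {σ : Perm α} {x : α} {k : ℕ} (hk : (σ ^ k) x = x) (t : ℕ) :
    (σ ^ (t % k)) x = (σ ^ t) x := by
  conv_rhs => rw [← Nat.div_add_mod t k, Nat.add_comm, pow_add, Equiv.Perm.mul_apply,
    pow_mul_self_apply hk]

lemma minimalPeriod_pos (σ : Perm α) (x : α) : 0 < Function.minimalPeriod (⇑σ) x := by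
  apply Function.minimalPeriod_pos_of_mem_periodicPts
  exact ⟨orderOf σ, orderOf_pos σ, by
    simp only [Function.IsPeriodicPt, Function.IsFixedPt, iterate_eq_pow, pow_orderOf_eq_one]
    rfl⟩

lemma pow_minimalPeriod_apply (σ : Perm α) (x : α) :
    (σ ^ Function.minimalPeriod (⇑σ) x) x = x := by
  have := Function.iterate_minimalPeriod (f := ⇑σ) (x := x)
  rwa [iterate_eq_pow] at this

lemma pow_apply_injOn (σ : Perm α) (x : α) :
    Set.InjOn (fun t => (σ ^ t) x) (Finset.range (Function.minimalPeriod (⇑σ) x)) := by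
  have key : ∀ s t : ℕ, s < t → t < Function.minimalPeriod (⇑σ) x →
      (σ ^ s) x = (σ ^ t) x → False := by
    intro s t hst ht h
    have h2 : (σ ^ (t - s)) x = x := by
      have : (σ ^ s) ((σ ^ (t - s)) x) = (σ ^ s) x := by
        rw [← Equiv.Perm.mul_apply, ← pow_add, Nat.add_sub_cancel' hst.le, ← h]
      exact (Equiv.injective _ this)
    have h3 : Function.IsPeriodicPt (⇑σ) (t - s) x := by
      simp only [Function.IsPeriodicPt, Function.IsFixedPt, iterate_eq_pow]
      exact h2
    exact Function.not_isPeriodicPt_of_pos_of_lt_minimalPeriod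
      (Nat.sub_ne_zero_of_lt hst) (by omega) h3
  intro s hs t ht h
  simp only [Finset.coe_range, Set.mem_Iio] at hs ht
  rcases lt_trichotomy s t with h' | h' | h'
  · exact absurd h (fun hh => key s t h' ht hh)
  · exact h'
  · exact absurd h.symm (fun hh => key t s h' hs hh)

lemma orbOf_eq_image_range (σ : Perm α) (x : α) :
    orbOf σ x = (Finset.range (Function.minimalPeriod (⇑σ) x)).image (fun t => (σ ^ t) x) := by
  ext y
  simp only [mem_orbOf, Finset.mem_image, Finset.mem_range]
  constructor
  · intro h
    obtain ⟨t, ht⟩ := sameCycle_exists_pow h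
    exact ⟨t % Function.minimalPeriod (⇑σ) x,
      Nat.mod_lt _ (minimalPeriod_pos σ x),
      by rw [pow_mod_apply (pow_minimalPeriod_apply σ x), ht]⟩
  · rintro ⟨t, -, rfl⟩
    exact ((sameCycle_pow_left).2 (SameCycle.refl _ _)).symm

lemma card_orbOf (σ : Perm α) (x : α) :
    (orbOf σ x).card = Function.minimalPeriod (⇑σ) x := by
  rw [orbOf_eq_image_range, Finset.card_image_of_injOn (pow_apply_injOn σ x),
    Finset.card_range]

lemma exists_enum {γ δ : Type*} [DecidableEq γ] :
    ∀ (l : List δ) (s : Finset γ) (F : γ → δ), s.val.map F = ↑l →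
    ∃ e : Fin l.length → γ, Function.Injective e ∧ (∀ i, e i ∈ s) ∧
      (∀ y ∈ s, ∃ i, e i = y) ∧ ∀ i, F (e i) = l.get i := by
  intro l
  induction l with
  | nil =>
    intro s F h
    have : s = ∅ := by
      rw [← Finset.val_eq_zero]
      simpa using congrArg Multiset.card h
    subst this
    exact ⟨Fin.elim0, fun a => a.elim0, fun a => a.elim0, fun y hy => by simp at hy,
      fun a => a.elim0⟩
  | cons d l ih =>
    intro s F h
    have hd : d ∈ s.val.map F := by rw [h]; simp
    obtain ⟨x, hx, hFx⟩ := Multiset.mem_map.1 hd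
    have hx' : x ∈ s := hx
    have herase : (s.erase x).val.map F = ↑l := by
      have h1 : s.val = x ::ₘ (s.erase x).val := by
        rw [Finset.erase_val]
        exact (Multiset.cons_erase hx).symm
      rw [h1, Multiset.map_cons, hFx] at h
      have h2 : (d ::ₘ (s.erase x).val.map F) = d ::ₘ (↑l : Multiset δ) := by
        rw [h]; rfl
      exact (Multiset.cons_inj_right d).1 h2
    obtain ⟨e, he_inj, he_mem, he_surj, he_get⟩ := ih (s.erase x) F herase
    refine ⟨Fin.cases x e, ?_, ?_, ?_, ?_⟩
    · intro a b hab
      induction a using Fin.cases with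
      | zero =>
        induction b using Fin.cases with
        | zero => rfl
        | succ b =>
          simp only [Fin.cases_zero, Fin.cases_succ] at hab
          exact absurd (hab ▸ he_mem b) (by simp)
      | succ a =>
        induction b using Fin.cases with
        | zero =>
          simp only [Fin.cases_zero, Fin.cases_succ] at hab
          exact absurd (hab ▸ he_mem a) (by simp)
        | succ b =>
          simp only [Fin.cases_succ] at hab
          exact congrArg Fin.succ (he_inj hab)
    · intro i
      induction i using Fin.cases with
      | zero => simpa using hx'
      | succ a => simpa using Finset.mem_of_mem_erase (he_mem a)
    · intro y hy
      by_cases hyx : y = x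
      · exact ⟨(0 : Fin (l.length + 1)), by simp [hyx]⟩
      · obtain ⟨i, hi⟩ := he_surj y (Finset.mem_erase.2 ⟨hyx, hy⟩)
        exact ⟨i.succ, by simpa using hi⟩
    · intro i
      induction i using Fin.cases with
      | zero => simpa using hFx
      | succ a => simpa using he_get a


lemma finRotate_val : ∀ (k : ℕ) (t : Fin k), ((finRotate k t : Fin k) : ℕ) = ((t : ℕ) + 1) % k := by
  intro k t
  cases k with
  | zero => exact t.elim0
  | succ k =>
    rw [finRotate_succ_apply, Fin.add_def]
    simp only [Fin.val_one']
    conv_rhs => rw [Nat.add_mod]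
    rw [Nat.add_mod (t : ℕ) (1 % (k+1)), Nat.mod_mod_of_dvd 1 dvd_rfl]

/-- The model permutation: block rotations. -/
def modelPerm (l : List (ℕ × A)) : Perm (Σ i : Fin l.length, Fin (l.get i).1) :=
  Equiv.sigmaCongrRight (fun i => finRotate (l.get i).1)

lemma model_lemma (σ : Perm α) (f : α → A) (l : List (ℕ × A)) (hl : wM f σ = ↑l) :
    ∃ E : (Σ i : Fin l.length, Fin (l.get i).1) ≃ α,
      (∀ x, σ (E x) = E (modelPerm l x)) ∧
      (∀ O ∈ orbs σ, ∃ i : Fin l.length, O = univ.image (fun t => E ⟨i, t⟩)) ∧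
      (∀ i : Fin l.length, ∏ t, f (E ⟨i, t⟩) = (l.get i).2) := by
  obtain ⟨e, he_inj, he_mem, he_surj, he_get⟩ := exists_enum l (orbs σ) (wdata f) hl
  have hrex : ∀ i, ∃ x, orbOf σ x = e i := by
    intro i
    obtain ⟨x, -, hx⟩ := Finset.mem_image.1 (he_mem i)
    exact ⟨x, hx⟩
  choose r hr using hrex
  have hk : ∀ i, (l.get i).1 = Function.minimalPeriod (⇑σ) (r i) := by
    intro i
    rw [← card_orbOf σ (r i), hr i]
    exact (congrArg Prod.fst (he_get i)).symm
  have hper : ∀ i, (σ ^ (l.get i).1) (r i) = r i := by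
    intro i; rw [hk i]; exact pow_minimalPeriod_apply σ (r i)
  set E' : (Σ i : Fin l.length, Fin (l.get i).1) → α :=
    fun x => (σ ^ (x.2 : ℕ)) (r x.1) with hE'
  have hmemE : ∀ (i : Fin l.length) (t : Fin (l.get i).1), E' ⟨i, t⟩ ∈ e i := by
    intro i t
    rw [← hr i, mem_orbOf]
    exact (sameCycle_pow_left.2 (SameCycle.refl _ _)).symm
  have huniq : ∀ (x : α) (i j : Fin l.length), x ∈ e i → x ∈ e j → i = j := by
    intro x i j hi hj
    exact he_inj ((orbs_eq_orbOf (he_mem i) hi).symm.trans (orbs_eq_orbOf (he_mem j) hj))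
  have hbij : Function.Bijective E' := by
    constructor
    · rintro ⟨i, t⟩ ⟨j, s⟩ heq
      have hij : i = j := huniq _ i j (hmemE i t) (heq ▸ hmemE j s)
      subst hij
      have hts : (t : ℕ) = (s : ℕ) := by
        apply pow_apply_injOn σ (r i) ?_ ?_ heq
        · simp only [Finset.coe_range, Set.mem_Iio]; rw [← hk i]; exact t.isLt
        · simp only [Finset.coe_range, Set.mem_Iio]; rw [← hk i]; exact s.isLt
      exact Sigma.ext rfl (by simp [Fin.ext_iff, hts])
    · intro x
      obtain ⟨i, hi⟩ := he_surj (orbOf σ x) (orbOf_mem_orbs σ x)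
      have hx : x ∈ e i := hi ▸ mem_orbOf_self σ x
      have : x ∈ orbOf σ (r i) := (hr i).symm ▸ hx
      rw [orbOf_eq_image_range] at this
      obtain ⟨t, ht, hxt⟩ := Finset.mem_image.1 this
      rw [Finset.mem_range, ← hk i] at ht
      exact ⟨⟨i, ⟨t, ht⟩⟩, hxt⟩
  refine ⟨Equiv.ofBijective E' hbij, ?_, ?_, ?_⟩
  · rintro ⟨i, t⟩
    show σ (E' ⟨i, t⟩) = E' ⟨i, finRotate _ t⟩
    simp only [hE']
    rw [finRotate_val, pow_mod_apply (hper i), pow_succ', Equiv.Perm.mul_apply]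
  · intro O hO
    obtain ⟨i, hi⟩ := he_surj O hO
    refine ⟨i, ?_⟩
    rw [← hi, ← hr i, orbOf_eq_image_range, ← hk i]
    ext y
    simp only [Finset.mem_image, Finset.mem_range, Finset.mem_univ, true_and]
    constructor
    · rintro ⟨t, ht, rfl⟩; exact ⟨⟨t, ht⟩, rfl⟩
    · rintro ⟨t, rfl⟩; exact ⟨(t : ℕ), t.isLt, rfl⟩
  · intro i
    have him : e i = univ.image (fun t : Fin (l.get i).1 => E' ⟨i, t⟩) := by
      rw [← hr i, orbOf_eq_image_range, ← hk i]
      ext y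
      simp only [Finset.mem_image, Finset.mem_range, Finset.mem_univ, true_and]
      constructor
      · rintro ⟨t, ht, rfl⟩; exact ⟨⟨t, ht⟩, rfl⟩
      · rintro ⟨t, rfl⟩; exact ⟨(t : ℕ), t.isLt, rfl⟩
    have hprod : ∏ j ∈ e i, f j = (l.get i).2 := congrArg Prod.snd (he_get i)
    rw [him, Finset.prod_image] at hprod
    · exact hprod
    · intro t _ s _ hts
      have := hbij.1 hts
      simpa [Sigma.ext_iff, Fin.ext_iff] using this

lemma symm_mem_orb {σ : Perm α} {O : Finset α} (hO : O ∈ orbs σ) {j : α} (hj : j ∈ O) :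
    σ.symm j ∈ O := by
  rw [← orbs_eq_orbOf hO hj, mem_orbOf]
  exact sameCycle_apply_right.mp (by rw [Equiv.apply_symm_apply])

lemma apply_mem_orb {σ : Perm α} {O : Finset α} (hO : O ∈ orbs σ) {j : α} (hj : j ∈ O) :
    σ j ∈ O := by
  rw [← orbs_eq_orbOf hO hj, mem_orbOf]
  exact sameCycle_apply_right.mpr (SameCycle.refl σ j)

lemma prod_orbit_comp_symm {σ : Perm α} {O : Finset α} (hO : O ∈ orbs σ) (h : α → A) :
    ∏ j ∈ O, h (σ.symm j) = ∏ j ∈ O, h j :=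
  Finset.prod_bij' (fun j _ => σ.symm j) (fun j _ => σ j)
    (fun j hj => symm_mem_orb hO hj) (fun j hj => apply_mem_orb hO hj)
    (fun j _ => by simp) (fun j _ => by simp) (fun j _ => rfl)

lemma exists_transfer [Fintype A] (σ : Perm α) (u : α → A) (hu : ∀ O ∈ orbs σ, ∏ j ∈ O, u j = 1) :
    ∃ h : α → A, ∀ x, h x * (h (σ.symm x))⁻¹ = u x := by
  classical
  set D : (α → A) →* (α → A) :=
    { toFun := fun h => h * (fun x => h (σ.symm x))⁻¹
      map_one' := by funext x; simp
      map_mul' := by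
        intro h g; funext x
        simp only [Pi.mul_apply, Pi.inv_apply, mul_inv]
        exact mul_mul_mul_comm _ _ _ _ } with hD
  set P : (α → A) →* ({ O // O ∈ orbs σ } → A) :=
    { toFun := fun u O => ∏ j ∈ O.1, u j
      map_one' := by funext O; simp
      map_mul' := by intro a b; funext O; simp [Finset.prod_mul_distrib] } with hP
  have hle : D.range ≤ P.ker := by
    rintro _ ⟨h, rfl⟩
    rw [MonoidHom.mem_ker]
    funext O
    show ∏ j ∈ O.1, (h j * (h (σ.symm j))⁻¹) = 1
    rw [Finset.prod_mul_distrib, Finset.prod_inv_distrib, prod_orbit_comp_symm O.2 h,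
      mul_inv_cancel]
  set rep : { O // O ∈ orbs σ } → α := fun O => (orbs_nonempty O.2).choose with hrepdef
  have hrep : ∀ O, rep O ∈ O.1 := fun O => (orbs_nonempty O.2).choose_spec
  have hrep_orb : ∀ O, orbOf σ (rep O) = O.1 := fun O => orbs_eq_orbOf O.2 (hrep O)
  -- kernel of D = functions constant on orbits
  have hconst : ∀ h : α → A, h ∈ D.ker → ∀ x y, σ.SameCycle x y → h x = h y := by
    intro h hh x y hxy
    have hfix : ∀ z, h (σ z) = h z := by
      intro z
      have h1 := congrFun (MonoidHom.mem_ker.1 hh) (σ z)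
      simp only [hD, MonoidHom.coe_mk, OneHom.coe_mk, Pi.mul_apply, Pi.inv_apply,
        Pi.one_apply, Equiv.symm_apply_apply] at h1
      exact mul_inv_eq_one.1 h1
    obtain ⟨t, rfl⟩ := sameCycle_exists_pow hxy
    clear hxy
    induction t with
    | zero => simp
    | succ t ih => rw [pow_succ', Equiv.Perm.mul_apply, hfix, ih]
  have kerEquiv : D.ker ≃ ({ O // O ∈ orbs σ } → A) := by
    refine
      { toFun := fun h O => h.1 (rep O)
        invFun := fun v => ⟨fun x => v ⟨orbOf σ x, orbOf_mem_orbs σ x⟩, ?_⟩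
        left_inv := ?_
        right_inv := ?_ }
    · rw [MonoidHom.mem_ker]
      funext x
      simp only [hD, MonoidHom.coe_mk, OneHom.coe_mk, Pi.mul_apply, Pi.inv_apply, Pi.one_apply]
      have horb : orbOf σ (σ.symm x) = orbOf σ x :=
        orbOf_eq_of_mem (symm_mem_orb (orbOf_mem_orbs σ x) (mem_orbOf_self σ x))
      have : (⟨orbOf σ (σ.symm x), orbOf_mem_orbs σ (σ.symm x)⟩ : { O // O ∈ orbs σ })
          = ⟨orbOf σ x, orbOf_mem_orbs σ x⟩ := Subtype.ext horb
      rw [this, mul_inv_cancel]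
    · intro h
      apply Subtype.ext
      funext x
      have : σ.SameCycle x (rep ⟨orbOf σ x, orbOf_mem_orbs σ x⟩) :=
        mem_orbOf.1 (hrep ⟨orbOf σ x, orbOf_mem_orbs σ x⟩)
      exact (hconst h.1 h.2 _ _ this).symm
    · intro v
      funext O
      have : (⟨orbOf σ (rep O), orbOf_mem_orbs σ (rep O)⟩ : { O // O ∈ orbs σ }) = O :=
        Subtype.ext (hrep_orb O)
      simp only [this]
  have hPsurj : Function.Surjective P := by
    intro v
    refine ⟨fun x => if x = rep ⟨orbOf σ x, orbOf_mem_orbs σ x⟩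
      then v ⟨orbOf σ x, orbOf_mem_orbs σ x⟩ else 1, ?_⟩
    funext O
    show (∏ j ∈ O.1, if j = rep ⟨orbOf σ j, orbOf_mem_orbs σ j⟩
      then v ⟨orbOf σ j, orbOf_mem_orbs σ j⟩ else 1) = v O
    have hcongr : ∀ j ∈ O.1, (if j = rep ⟨orbOf σ j, orbOf_mem_orbs σ j⟩
        then v ⟨orbOf σ j, orbOf_mem_orbs σ j⟩ else 1) = if j = rep O then v O else 1 := by
      intro j hj
      have hsub : (⟨orbOf σ j, orbOf_mem_orbs σ j⟩ : { O // O ∈ orbs σ }) = O :=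
        Subtype.ext (orbs_eq_orbOf O.2 hj)
      rw [hsub]
    rw [Finset.prod_congr rfl hcongr, Finset.prod_ite_eq' O.1 (rep O) (fun _ => v O),
      if_pos (hrep O)]
  -- cardinality comparison
  have hcard : Nat.card D.range = Nat.card P.ker := by
    have h2 : Nat.card (α → A) = Nat.card D.range * Nat.card D.ker := by
      rw [Subgroup.card_eq_card_quotient_mul_card_subgroup D.ker]
      congr 1
      exact Nat.card_congr (QuotientGroup.quotientKerEquivRange D).toEquiv.symm |>.symm
    have h3 : Nat.card (α → A) = Nat.card ({ O // O ∈ orbs σ } → A) * Nat.card P.ker := by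
      rw [Subgroup.card_eq_card_quotient_mul_card_subgroup P.ker]
      congr 1
      rw [Nat.card_congr (QuotientGroup.quotientKerEquivRange P).toEquiv]
      rw [MonoidHom.range_eq_top.2 hPsurj]
      exact Nat.card_congr (Equiv.Set.univ _)
    have hkD : Nat.card D.ker = Nat.card ({ O // O ∈ orbs σ } → A) := Nat.card_congr kerEquiv
    have hpos : 0 < Nat.card ({ O // O ∈ orbs σ } → A) := Nat.card_pos
    rw [hkD] at h2
    have key : Nat.card D.range * Nat.card ({ O // O ∈ orbs σ } → A)
        = Nat.card P.ker * Nat.card ({ O // O ∈ orbs σ } → A) := by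
      rw [← h2, h3]; ring
    exact Nat.eq_of_mul_eq_mul_right hpos key
  have heq : D.range = P.ker := Subgroup.eq_of_le_of_card_ge hle hcard.ge
  have hmem : u ∈ P.ker := by
    rw [MonoidHom.mem_ker]
    funext O
    exact hu O.1 O.2
  rw [← heq] at hmem
  obtain ⟨h, hh⟩ := hmem
  refine ⟨h, fun x => ?_⟩
  have := congrFun hh x
  exact this


lemma permCongr_pow (e : α ≃ β) (σ : Perm α) (t : ℕ) :
    (e.permCongr σ) ^ t = e.permCongr (σ ^ t) := by
  induction t with
  | zero => ext x; simp
  | succ t ih =>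
    ext x
    rw [pow_succ, pow_succ]
    simp [ih, Equiv.permCongr_apply, Equiv.Perm.mul_apply]

lemma sameCycle_permCongr {e : α ≃ β} {σ : Perm α} {x y : α} :
    (e.permCongr σ).SameCycle (e x) (e y) ↔ σ.SameCycle x y := by
  constructor
  · intro h
    obtain ⟨t, ht⟩ := sameCycle_exists_pow h
    rw [permCongr_pow] at ht
    simp only [Equiv.permCongr_apply, Equiv.symm_apply_apply] at ht
    exact ⟨(t : ℤ), by rw [zpow_natCast]; exact e.injective ht⟩
  · intro h
    obtain ⟨t, ht⟩ := sameCycle_exists_pow h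
    refine ⟨(t : ℤ), ?_⟩
    rw [zpow_natCast, permCongr_pow]
    simp only [Equiv.permCongr_apply, Equiv.symm_apply_apply, ht]

lemma orbOf_permCongr (e : α ≃ β) (σ : Perm α) (x : α) :
    orbOf (e.permCongr σ) (e x) = (orbOf σ x).image e := by
  ext y
  obtain ⟨y', rfl⟩ := e.surjective y
  simp only [mem_orbOf, Finset.mem_image]
  rw [sameCycle_permCongr]
  constructor
  · intro h; exact ⟨y', h, rfl⟩
  · rintro ⟨z, hz, hzy⟩
    have : z = y' := e.injective hzy
    exact this ▸ hz

lemma orbs_permCongr (e : α ≃ β) (σ : Perm α) :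
    orbs (e.permCongr σ) = (orbs σ).image (Finset.image e) := by
  ext O
  simp only [orbs, Finset.mem_image]
  constructor
  · rintro ⟨y, -, rfl⟩
    obtain ⟨x, rfl⟩ := e.surjective y
    exact ⟨orbOf σ x, ⟨x, Finset.mem_univ x, rfl⟩, (orbOf_permCongr e σ x).symm⟩
  · rintro ⟨O', ⟨x, -, rfl⟩, rfl⟩
    exact ⟨e x, Finset.mem_univ _, orbOf_permCongr e σ x⟩

lemma wM_permCongr (e : α ≃ β) (σ : Perm α) (f : α → A) :
    wM (f ∘ ⇑e.symm) (e.permCongr σ) = wM f σ := by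
  unfold wM
  rw [orbs_permCongr, Finset.image_val_of_injOn ((Finset.image_injective e.injective).injOn),
    Multiset.map_map]
  apply Multiset.map_congr rfl
  intro O hO
  unfold wdata
  refine Prod.ext ?_ ?_
  · simpa using Finset.card_image_of_injective O e.injective
  · show ∏ y ∈ O.image e, f (e.symm y) = ∏ x ∈ O, f x
    rw [Finset.prod_image (fun x _ y _ h => e.injective h)]
    simp

lemma wM_mul_coboundary (σ : Perm α) (f g : α → A) :
    wM (g * f * (fun x => (g (σ.symm x))⁻¹)) σ = wM f σ := by
  unfold wM
  apply Multiset.map_congr rfl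
  intro O hO
  unfold wdata
  refine Prod.ext rfl ?_
  show (∏ j ∈ O, g j * f j * (g (σ.symm j))⁻¹) = ∏ j ∈ O, f j
  rw [Finset.prod_mul_distrib, Finset.prod_mul_distrib, Finset.prod_inv_distrib,
    prod_orbit_comp_symm hO g, mul_right_comm, mul_inv_cancel, one_mul]

lemma exists_perm_of_wM_eq {σ τ : Perm α} {f g : α → A} (h : wM f σ = wM g τ) :
    ∃ π : Perm α, (∀ x, π (σ x) = τ (π x)) ∧
      ∀ O ∈ orbs τ, ∏ j ∈ O, f (π.symm j) = ∏ j ∈ O, g j := by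
  set l := (wM f σ).toList with hldef
  have hl1 : wM f σ = ↑l := (Multiset.coe_toList _).symm
  have hl2 : wM g τ = ↑l := h ▸ hl1
  obtain ⟨E₁, hE₁σ, hE₁orb, hE₁prod⟩ := model_lemma σ f l hl1
  obtain ⟨E₂, hE₂σ, hE₂orb, hE₂prod⟩ := model_lemma τ g l hl2
  have hmk : ∀ (i : Fin l.length) (t s : Fin (l.get i).1),
      (⟨i, t⟩ : Σ i : Fin l.length, Fin (l.get i).1) = ⟨i, s⟩ → t = s := by
    intro i t s hh
    exact eq_of_heq (Sigma.mk.inj_iff.1 hh).2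
  refine ⟨(E₁.symm.trans E₂ : α ≃ α), ?_, ?_⟩
  · intro x
    show E₂ (E₁.symm (σ x)) = τ (E₂ (E₁.symm x))
    rw [hE₂σ (E₁.symm x)]
    apply congrArg
    have h1 := hE₁σ (E₁.symm x)
    rw [Equiv.apply_symm_apply] at h1
    rw [h1, Equiv.symm_apply_apply]
  · intro O hO
    obtain ⟨i, rfl⟩ := hE₂orb O hO
    have hinj2 : ∀ t ∈ (univ : Finset (Fin (l.get i).1)), ∀ s ∈ univ,
        E₂ ⟨i, t⟩ = E₂ ⟨i, s⟩ → t = s :=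
      fun t _ s _ hts => hmk i t s (E₂.injective hts)
    rw [Finset.prod_image hinj2, Finset.prod_image hinj2]
    have hsymm : ∀ t : Fin (l.get i).1,
        (E₁.symm.trans E₂ : α ≃ α).symm (E₂ ⟨i, t⟩) = E₁ ⟨i, t⟩ := by
      intro t; simp
    calc (∏ t, f ((E₁.symm.trans E₂ : α ≃ α).symm (E₂ ⟨i, t⟩)))
        = ∏ t, f (E₁ ⟨i, t⟩) := by
          apply Finset.prod_congr rfl; intro t _; rw [hsymm]
      _ = (l.get i).2 := hE₁prod i
      _ = ∏ t, g (E₂ ⟨i, t⟩) := (hE₂prod i).symm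

-- surjectivity part
open Fin.NatCast in
lemma rot_pow (k : ℕ) (d : ℕ) (t : Fin (k + 1)) :
    ((finRotate (k + 1)) ^ d) t = t + (d : Fin (k + 1)) := by
  induction d with
  | zero => simp
  | succ d ih =>
    rw [pow_succ', Equiv.Perm.mul_apply, ih, finRotate_succ_apply]
    push_cast
    abel

open Fin.NatCast in
lemma rot_exists {k : ℕ} (t s : Fin k) : ∃ d : ℕ, ((finRotate k) ^ d) t = s := by
  cases k with
  | zero => exact t.elim0
  | succ k =>
    refine ⟨((s - t : Fin (k + 1)) : ℕ), ?_⟩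
    rw [rot_pow, Fin.cast_val_eq_self]
    abel

lemma modelPerm_pow (l : List (ℕ × A)) (d : ℕ) (x : Σ i : Fin l.length, Fin (l.get i).1) :
    ((modelPerm l) ^ d) x = ⟨x.1, ((finRotate (l.get x.1).1) ^ d) x.2⟩ := by
  induction d with
  | zero => simp
  | succ d ih =>
    rw [pow_succ', Equiv.Perm.mul_apply, ih, pow_succ', Equiv.Perm.mul_apply]
    rfl

lemma orbOf_modelPerm (l : List (ℕ × A)) (i : Fin l.length) (t : Fin (l.get i).1) :
    orbOf (modelPerm l) ⟨i, t⟩ = univ.filter (fun x => x.1 = i) := by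
  ext ⟨j, s⟩
  simp only [mem_orbOf, Finset.mem_filter, Finset.mem_univ, true_and]
  constructor
  · intro h
    obtain ⟨d, hd⟩ := sameCycle_exists_pow h
    rw [modelPerm_pow] at hd
    exact (congrArg Sigma.fst hd).symm
  · rintro rfl
    obtain ⟨d, hd⟩ := rot_exists t s
    exact ⟨(d : ℤ), by rw [zpow_natCast, modelPerm_pow]; exact congrArg _ (by rw [hd])⟩

lemma exists_wM_eq (μ : Multiset (ℕ × A)) (hpos : ∀ x ∈ μ, 0 < x.1)
    (hsum : (μ.map Prod.fst).sum = Fintype.card α) :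
    ∃ (f : α → A) (σ : Perm α), wM f σ = μ := by
  classical
  set l := μ.toList with hldef
  have hμl : μ = ↑l := (Multiset.coe_toList _).symm
  have hposl : ∀ i : Fin l.length, 0 < (l.get i).1 := by
    intro i
    exact hpos _ (by rw [hμl]; exact Multiset.mem_coe.2 (l.get_mem _))
  set f₀ : (Σ i : Fin l.length, Fin (l.get i).1) → A :=
    fun x => if (x.2 : ℕ) = 0 then (l.get x.1).2 else 1 with hf₀
  have hfiber : ∀ i : Fin l.length,
      (univ.filter (fun x : Σ i : Fin l.length, Fin (l.get i).1 => x.1 = i))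
        = univ.image (fun t : Fin (l.get i).1 => (⟨i, t⟩ : Σ i, Fin (l.get i).1)) := by
    intro i
    ext ⟨j, s⟩
    simp only [Finset.mem_filter, Finset.mem_univ, true_and, Finset.mem_image]
    constructor
    · rintro rfl; exact ⟨s, rfl⟩
    · rintro ⟨t, ht⟩; exact (congrArg Sigma.fst ht).symm
  have horbs : orbs (modelPerm l)
      = univ.image (fun i : Fin l.length =>
          univ.filter (fun x : Σ i : Fin l.length, Fin (l.get i).1 => x.1 = i)) := by
    ext O
    simp only [orbs, Finset.mem_image]
    constructor
    · rintro ⟨⟨i, t⟩, -, rfl⟩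
      exact ⟨i, Finset.mem_univ i, (orbOf_modelPerm l i t).symm⟩
    · rintro ⟨i, -, rfl⟩
      exact ⟨⟨i, ⟨0, hposl i⟩⟩, Finset.mem_univ _, orbOf_modelPerm l i ⟨0, hposl i⟩⟩
  have hwM₀ : wM f₀ (modelPerm l) = μ := by
    unfold wM
    have hinj : Set.InjOn (fun i : Fin l.length =>
        univ.filter (fun x : Σ i : Fin l.length, Fin (l.get i).1 => x.1 = i))
        ↑(univ : Finset (Fin l.length)) := by
      intro i _ j _ hij
      have h0 : (⟨i, ⟨0, hposl i⟩⟩ : Σ i : Fin l.length, Fin (l.get i).1)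
          ∈ univ.filter (fun x : Σ i : Fin l.length, Fin (l.get i).1 => x.1 = i) := by simp
      rw [show (univ.filter (fun x : Σ i : Fin l.length, Fin (l.get i).1 => x.1 = i))
          = (univ.filter (fun x : Σ i : Fin l.length, Fin (l.get i).1 => x.1 = j)) from hij] at h0
      simpa using (Finset.mem_filter.1 h0).2
    rw [horbs, Finset.image_val_of_injOn hinj, Multiset.map_map]
    have hdata : ∀ i : Fin l.length,
        wdata f₀ (univ.filter (fun x : Σ i : Fin l.length, Fin (l.get i).1 => x.1 = i))
          = l.get i := by
      intro i
      rw [hfiber i]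
      unfold wdata
      refine Prod.ext ?_ ?_
      · show (univ.image (fun t : Fin (l.get i).1 => (⟨i, t⟩ : Σ i, Fin (l.get i).1))).card
          = (l.get i).1
        rw [Finset.card_image_of_injective _ (fun t s hts => eq_of_heq (Sigma.mk.inj_iff.1 hts).2)]
        simp
      · show (∏ x ∈ univ.image (fun t : Fin (l.get i).1 => (⟨i, t⟩ : Σ i, Fin (l.get i).1)),
          f₀ x) = (l.get i).2
        rw [Finset.prod_image (fun t _ s _ hts => eq_of_heq (Sigma.mk.inj_iff.1 hts).2)]
        rw [Finset.prod_eq_single (⟨0, hposl i⟩ : Fin (l.get i).1)]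
        · simp [hf₀]
        · intro b _ hb
          simp only [hf₀]
          rw [if_neg]
          intro hb0
          exact hb (Fin.ext hb0)
        · intro habs; exact absurd (Finset.mem_univ _) habs
    calc (Finset.univ.val.map fun i : Fin l.length =>
            wdata f₀ (univ.filter (fun x : Σ i : Fin l.length, Fin (l.get i).1 => x.1 = i)))
        = Finset.univ.val.map (fun i : Fin l.length => l.get i) := by
          apply Multiset.map_congr rfl
          intro i _
          exact hdata i
      _ = ↑((List.finRange l.length).map l.get) := by
          rw [← Multiset.map_coe]
          rfl
      _ = ↑l := by rw [List.map_get_finRange]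
      _ = μ := hμl.symm
  have hcards : Fintype.card (Σ i : Fin l.length, Fin (l.get i).1) = Fintype.card α := by
    rw [Fintype.card_sigma]
    simp only [Fintype.card_fin]
    rw [← hsum, hμl]
    rw [Multiset.map_coe, Multiset.sum_coe]
    conv_rhs => rw [← List.map_get_finRange l, List.map_map]
    rw [← Multiset.sum_coe, ← Multiset.map_coe]
    rfl
  set E : (Σ i : Fin l.length, Fin (l.get i).1) ≃ α := Fintype.equivOfCardEq hcards
  exact ⟨f₀ ∘ ⇑E.symm, E.permCongr (modelPerm l), by rw [wM_permCongr, hwM₀]⟩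


end General

section Wreath
variable (n m : ℕ)

abbrev WA := Multiplicative (ZMod (n + 1))
abbrev W := (Fin m → WA n) ⋊[wreathPermHom n m] Equiv.Perm (Fin m)

variable {n m}

lemma wreathPermHom_apply (σ : Perm (Fin m)) (f : Fin m → WA n) :
    wreathPermHom n m σ f = f ∘ ⇑σ.symm := rfl

lemma conj_by_perm (f : Fin m → WA n) (σ τ : Perm (Fin m)) :
    (⟨1, τ⟩ : W n m) * ⟨f, σ⟩ * (⟨1, τ⟩ : W n m)⁻¹
      = ⟨f ∘ ⇑τ.symm, τ.permCongr σ⟩ := by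
  refine SemidirectProduct.ext ?_ ?_
  · show (1 * wreathPermHom n m τ f) * wreathPermHom n m (τ * σ)
        ((wreathPermHom n m τ⁻¹) 1⁻¹) = f ∘ ⇑τ.symm
    simp only [inv_one, map_one, mul_one, one_mul, wreathPermHom_apply]
  · show (τ * σ) * τ⁻¹ = τ.permCongr σ
    ext x
    simp [Equiv.permCongr_apply, Equiv.Perm.mul_apply]

lemma conj_by_base (f h : Fin m → WA n) (σ : Perm (Fin m)) :
    (⟨h, 1⟩ : W n m) * ⟨f, σ⟩ * (⟨h, 1⟩ : W n m)⁻¹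
      = ⟨h * f * (fun x => (h (σ.symm x))⁻¹), σ⟩ := by
  refine SemidirectProduct.ext ?_ ?_
  · show (h * wreathPermHom n m 1 f) * wreathPermHom n m (1 * σ)
        ((wreathPermHom n m 1⁻¹) h⁻¹) = h * f * (fun x => (h (σ.symm x))⁻¹)
    simp only [inv_one, map_one, MulAut.one_apply, one_mul, wreathPermHom_apply]
    rfl
  · show (1 * σ) * 1 = σ
    group

lemma isConj_of_wM_eq {σ τ : Perm (Fin m)} {f g : Fin m → WA n} (h : wM f σ = wM g τ) :
    IsConj (⟨f, σ⟩ : W n m) ⟨g, τ⟩ := by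
  obtain ⟨π, hπ, hprod⟩ := exists_perm_of_wM_eq h
  have hστ : π.permCongr σ = τ := by
    ext x
    rw [Equiv.permCongr_apply, hπ (π.symm x), Equiv.apply_symm_apply]
  set u : Fin m → WA n := g * (fun x => (f (π.symm x))⁻¹) with hu_def
  have hu : ∀ O ∈ orbs τ, ∏ j ∈ O, u j = 1 := by
    intro O hO
    simp only [hu_def, Pi.mul_apply]
    rw [Finset.prod_mul_distrib, Finset.prod_inv_distrib, ← hprod O hO, mul_inv_cancel]
  obtain ⟨h', hh'⟩ := exists_transfer τ u hu
  rw [isConj_iff]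
  refine ⟨(⟨h', 1⟩ : W n m) * ⟨1, π⟩, ?_⟩
  have hgrp : ((⟨h', 1⟩ : W n m) * ⟨1, π⟩) * ⟨f, σ⟩ * ((⟨h', 1⟩ : W n m) * ⟨1, π⟩)⁻¹
      = (⟨h', 1⟩ : W n m) * ((⟨1, π⟩ : W n m) * ⟨f, σ⟩ * (⟨1, π⟩ : W n m)⁻¹) * (⟨h', 1⟩ : W n m)⁻¹ := by
    group
  rw [hgrp, conj_by_perm, hστ, conj_by_base]
  congr 1
  funext x
  simp only [Pi.mul_apply, Function.comp_apply, Pi.inv_apply]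
  have := hh' x
  simp only [hu_def, Pi.mul_apply, Pi.inv_apply] at this
  calc h' x * f (π.symm x) * (h' (τ.symm x))⁻¹
      = (h' x * (h' (τ.symm x))⁻¹) * f (π.symm x) := by rw [mul_right_comm]
    _ = g x * (f (π.symm x))⁻¹ * f (π.symm x) := by rw [this]
    _ = g x := by rw [inv_mul_cancel_right]

lemma wM_conj_invariant (w c : W n m) :
    wM (c * w * c⁻¹).left (c * w * c⁻¹).right = wM w.left w.right := by
  obtain ⟨f, σ⟩ := w
  obtain ⟨g, τ⟩ := c
  have hc : (⟨g, τ⟩ : W n m) = ⟨g, 1⟩ * ⟨1, τ⟩ := by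
    refine SemidirectProduct.ext ?_ ?_ <;> simp
  rw [hc]
  have hgrp : ((⟨g, 1⟩ : W n m) * ⟨1, τ⟩) * ⟨f, σ⟩ * ((⟨g, 1⟩ : W n m) * ⟨1, τ⟩)⁻¹
      = (⟨g, 1⟩ : W n m) * ((⟨1, τ⟩ : W n m) * ⟨f, σ⟩ * (⟨1, τ⟩ : W n m)⁻¹) * (⟨g, 1⟩ : W n m)⁻¹ := by
    group
  rw [hgrp, conj_by_perm, conj_by_base]
  show wM (g * (f ∘ ⇑τ.symm) * fun x => (g ((τ.permCongr σ).symm x))⁻¹) (τ.permCongr σ)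
      = wM f σ
  rw [wM_mul_coboundary, wM_permCongr]

end Wreath

lemma sum_msum {γ δ : Type*} [AddCommMonoid δ] (s : Finset γ) (T : γ → Multiset δ) :
    ∑ j ∈ s, (T j).sum = (∑ j ∈ s, T j).sum := by
  induction s using Finset.cons_induction with
  | empty => simp
  | cons a s ha ih => rw [Finset.sum_cons, Finset.sum_cons, Multiset.sum_add, ih]

lemma map_msum {γ δ ε : Type*} (s : Finset γ) (T : γ → Multiset δ) (f : δ → ε) :
    (∑ j ∈ s, T j).map f = ∑ j ∈ s, (T j).map f := by
  induction s using Finset.cons_induction with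
  | empty => simp
  | cons a s ha ih => rw [Finset.sum_cons, Finset.sum_cons, Multiset.map_add, ih]

lemma filter_msum {γ δ : Type*} (s : Finset γ) (T : γ → Multiset δ) (p : δ → Prop)
    [DecidablePred p] :
    (∑ j ∈ s, T j).filter p = ∑ j ∈ s, (T j).filter p := by
  induction s using Finset.cons_induction with
  | empty => simp
  | cons a s ha ih => rw [Finset.sum_cons, Finset.sum_cons, Multiset.filter_add, ih]

lemma sum_filter_snd {A γ : Type*} [Fintype A] [DecidableEq A] [DecidableEq γ] (μ : Multiset γ) (g : γ → A) :
    ∑ a : A, μ.filter (fun x => g x = a) = μ := by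
  refine Multiset.ext.2 fun y => ?_
  rw [Multiset.count_sum']
  have : ∀ a : A, Multiset.count y (μ.filter (fun x => g x = a))
      = if g y = a then Multiset.count y μ else 0 := by
    intro a
    rw [Multiset.count_filter]
  rw [Finset.sum_congr rfl (fun a _ => this a), Finset.sum_ite_eq univ (g y)
    (fun _ => Multiset.count y μ), if_pos (mem_univ _)]

lemma sigma_partition_ext {k k' : ℕ} {P : Nat.Partition k} {P' : Nat.Partition k'}
    (h : P.parts = P'.parts) : (⟨k, P⟩ : Σ k, Nat.Partition k) = ⟨k', P'⟩ := by
  have hk : k = k' := by rw [← P.parts_sum, ← P'.parts_sum, h]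
  subst hk
  exact congrArg _ (Nat.Partition.ext h)


variable (n m : ℕ)

noncomputable def eZ : WA n ≃ Fin (n + 1) :=
  Fintype.equivFinOfCardEq (by simp [ZMod.card])

noncomputable def msPartEquiv :
    {μ : Multiset (ℕ × WA n) // (∀ x ∈ μ, 0 < x.1) ∧ (μ.map Prod.fst).sum = m}
      ≃ {p : Fin (n + 1) → Σ k : ℕ, Nat.Partition k // (∑ j, (p j).1) = m} where
  toFun μ := by
    refine ⟨fun j => ⟨((μ.1.filter (fun x => x.2 = (eZ n).symm j)).map Prod.fst).sum,
      { parts := (μ.1.filter (fun x => x.2 = (eZ n).symm j)).map Prod.fst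
        parts_pos := ?_
        parts_sum := rfl }⟩, ?_⟩
    · intro i hi
      obtain ⟨x, hx, rfl⟩ := Multiset.mem_map.1 hi
      exact μ.2.1 x (Multiset.mem_of_mem_filter hx)
    · show (∑ j, ((μ.1.filter (fun x => x.2 = (eZ n).symm j)).map Prod.fst).sum) = m
      rw [sum_msum, ← map_msum, Equiv.sum_comp (eZ n).symm
        (fun a => μ.1.filter (fun x => x.2 = a)), sum_filter_snd]
      exact μ.2.2
  invFun p := by
    refine ⟨∑ j, ((p.1 j).2.parts.map (fun k => (k, (eZ n).symm j))), ?_, ?_⟩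
    · intro x hx
      obtain ⟨j, -, hj⟩ := Multiset.mem_sum.1 hx
      obtain ⟨k, hk, rfl⟩ := Multiset.mem_map.1 hj
      exact (p.1 j).2.parts_pos hk
    · rw [map_msum]
      have : ∀ j : Fin (n + 1),
          (((p.1 j).2.parts.map (fun k => (k, (eZ n).symm j))).map Prod.fst).sum
            = (p.1 j).1 := by
        intro j
        rw [Multiset.map_map]
        show ((p.1 j).2.parts.map (fun k => k)).sum = _
        rw [Multiset.map_id', (p.1 j).2.parts_sum]
      rw [← sum_msum, Finset.sum_congr rfl (fun j _ => this j)]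
      exact p.2
  left_inv := by
    rintro ⟨μ, hpos, hsum⟩
    apply Subtype.ext
    show (∑ j, ((μ.filter (fun x => x.2 = (eZ n).symm j)).map Prod.fst).map
        (fun k => (k, (eZ n).symm j))) = μ
    have : ∀ j : Fin (n + 1),
        ((μ.filter (fun x => x.2 = (eZ n).symm j)).map Prod.fst).map
          (fun k => (k, (eZ n).symm j)) = μ.filter (fun x => x.2 = (eZ n).symm j) := by
      intro j
      rw [Multiset.map_map]
      have hmc : (μ.filter (fun x => x.2 = (eZ n).symm j)).map
          ((fun k => (k, (eZ n).symm j)) ∘ Prod.fst)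
          = (μ.filter (fun x => x.2 = (eZ n).symm j)).map id := by
        apply Multiset.map_congr rfl
        intro x hx
        have hx2 := Multiset.of_mem_filter hx
        show (x.1, (eZ n).symm j) = x
        rw [← hx2]
      rw [hmc, Multiset.map_id]
    rw [Finset.sum_congr rfl (fun j _ => this j),
      Equiv.sum_comp (eZ n).symm (fun a => μ.filter (fun x => x.2 = a)), sum_filter_snd]
  right_inv := by
    rintro ⟨p, hp⟩
    apply Subtype.ext
    funext j
    show (⟨_, _⟩ : Σ k : ℕ, Nat.Partition k) = p j
    apply sigma_partition_ext
    show ((∑ j', ((p j').2.parts.map (fun k => (k, (eZ n).symm j')))).filter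
        (fun x => x.2 = (eZ n).symm j)).map Prod.fst = (p j).2.parts
    rw [filter_msum]
    have : ∀ j' : Fin (n + 1),
        ((p j').2.parts.map (fun k => (k, (eZ n).symm j'))).filter
          (fun x => x.2 = (eZ n).symm j)
        = if j' = j then (p j).2.parts.map (fun k => (k, (eZ n).symm j)) else 0 := by
      intro j'
      rw [Multiset.filter_map]
      by_cases hjj : j' = j
      · subst hjj
        rw [if_pos rfl]
        congr 1
        apply Multiset.filter_eq_self.2
        intro k _
        rfl
      · rw [if_neg hjj]
        have : ∀ k ∈ (p j').2.parts, ¬ ((fun x : ℕ × WA n => x.2 = (eZ n).symm j)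
            ∘ (fun k => (k, (eZ n).symm j'))) k := by
          intro k _ hk
          exact hjj ((eZ n).symm.injective hk)
        rw [Multiset.filter_eq_nil.2 this, Multiset.map_zero]
    rw [Finset.sum_congr rfl (fun j' _ => this j'),
      Finset.sum_ite_eq' univ j (fun _ => (p j).2.parts.map (fun k => (k, (eZ n).symm j))),
      if_pos (mem_univ _), Multiset.map_map]
    show ((p j).2.parts.map (fun k => k)) = _
    rw [Multiset.map_id']



section Final
variable {α : Type*} [Fintype α] [DecidableEq α] {A : Type*} [CommGroup A]

lemma wM_pos (f : α → A) (σ : Perm α) : ∀ x ∈ wM f σ, 0 < x.1 := by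
  intro x hx
  obtain ⟨O, hO, rfl⟩ := Multiset.mem_map.1 hx
  have hO' : O ∈ orbs σ := hO
  exact Finset.card_pos.2 (orbs_nonempty hO')

lemma wM_fst_sum (f : α → A) (σ : Perm α) :
    ((wM f σ).map Prod.fst).sum = Fintype.card α := by
  unfold wM
  rw [Multiset.map_map]
  exact sum_orbs_card σ

end Final

theorem main (n m : ℕ) :
    Nat.card (ConjClasses (W n m))
      = Nat.card {p : Fin (n + 1) → Σ k : ℕ, Nat.Partition k // (∑ j, (p j).1) = m} := by
  classical
  let Q : ConjClasses (W n m) →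
      {μ : Multiset (ℕ × WA n) // (∀ x ∈ μ, 0 < x.1) ∧ (μ.map Prod.fst).sum = m} :=
    Quotient.lift
      (fun w : W n m => (⟨wM w.left w.right, wM_pos _ _,
        by rw [wM_fst_sum, Fintype.card_fin]⟩ :
          {μ : Multiset (ℕ × WA n) // (∀ x ∈ μ, 0 < x.1) ∧ (μ.map Prod.fst).sum = m}))
      (by
        intro w₁ w₂ hab
        obtain ⟨c, hc⟩ := isConj_iff.1 (hab : IsConj w₁ w₂)
        apply Subtype.ext
        show wM w₁.left w₁.right = wM w₂.left w₂.right
        rw [← hc, wM_conj_invariant])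
  have hQbij : Function.Bijective Q := by
    constructor
    · intro x y
      induction x using Quotient.inductionOn with
      | h w₁ =>
        induction y using Quotient.inductionOn with
        | h w₂ =>
          intro h
          apply Quotient.sound
          have hwm : wM w₁.left w₁.right = wM w₂.left w₂.right := congrArg Subtype.val h
          show IsConj w₁ w₂
          obtain ⟨f, σ⟩ := w₁
          obtain ⟨g, τ⟩ := w₂
          exact isConj_of_wM_eq hwm
    · intro μ
      obtain ⟨f, σ, hfσ⟩ := exists_wM_eq (α := Fin m) μ.1 μ.2.1
        (by rw [Fintype.card_fin]; exact μ.2.2)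
      exact ⟨Quotient.mk _ (⟨f, σ⟩ : W n m), Subtype.ext hfσ⟩
  calc Nat.card (ConjClasses (W n m))
      = Nat.card {μ : Multiset (ℕ × WA n) // (∀ x ∈ μ, 0 < x.1) ∧ (μ.map Prod.fst).sum = m} :=
        Nat.card_eq_of_bijective Q hQbij
    _ = _ := Nat.card_congr (msPartEquiv n m)

end WreathAux

/-- For every positive integer `m`, the number of conjugacy classes of the wreath
product `ℤ/(n+1) ≀ S_m = (ℤ/(n+1))^m ⋊ S_m` equals the number of `(n+1)`-tuples of
partitions `(λ^0, …, λ^n)` with `∑_j |λ^j| = m`, i.e. the number of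
`ℤ/(n+1)`-weighted partitions of `m`. -/
theorem wreath_product_conjClasses_card (n m : ℕ) (hm : 0 < m) :
    Nat.card (ConjClasses
        ((Fin m → Multiplicative (ZMod (n + 1))) ⋊[wreathPermHom n m] Equiv.Perm (Fin m)))
      = Nat.card {p : Fin (n + 1) → Σ k : ℕ, Nat.Partition k // (∑ j, (p j).1) = m} :=
  WreathAux.main n m
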